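/- Let h ∈ ℂ with h ∉ 2πi·ℚ, q := exp(h). Let ℓ ∈ ℂ and let m₀ ∈ ℂ satisfy q^{2m₀+k} ≠ −1 for all k ∈ ℤ. Then the generic Gelfand–Tsetlin representation V^ℓ_{m₀} has length at most 3: every strictly increasing chain 0 = U₀ ⊊ U₁ ⊊ ⋯ ⊊ U_n = V of ℂ-linear subspaces of V = ⊕_{k∈ℤ} ℂ·e_k, each invariant under both I₂₁ and I₃₂, has n ≤ 3. -/

import Mathlib

/-- `q^b := exp(h·b)`. -/
noncomputable def qpow (h b : ℂ) : ℂ := Complex.exp (h * b)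

/-- the q-number `[b] := (q^b − q^{−b})/(q − q^{−1})` where `q = exp h`. -/
noncomputable def qnum (h b : ℂ) : ℂ :=
  (Complex.exp (h * b) - Complex.exp (-(h * b))) / (Complex.exp h - Complex.exp (-h))

/-- The rationalized Gelfand–Tsetlin coefficient
`a_k = [ℓ+m₀+k+1][ℓ−m₀−k]/((q^{m₀+k}+q^{−(m₀+k)})(q^{m₀+k+1}+q^{−(m₀+k+1)}))`. -/
noncomputable def gtA (h ℓ m₀ : ℂ) (k : ℤ) : ℂ :=
  qnum h (ℓ + m₀ + k + 1) * qnum h (ℓ - m₀ - k) /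
    ((qpow h (m₀ + k) + qpow h (-(m₀ + k))) *
      (qpow h (m₀ + k + 1) + qpow h (-(m₀ + k + 1))))


lemma key_int (h : ℂ) (hh : ∀ r : ℚ, h ≠ 2 * Real.pi * Complex.I * r)
    (m : ℤ) (hm0 : Complex.exp (h * m) = 1) : m = 0 := by
  by_contra hm
  obtain ⟨n, hn⟩ := Complex.exp_eq_one_iff.mp hm0
  apply hh ((n : ℚ) / (m : ℚ))
  have hmc : (m : ℂ) ≠ 0 := Int.cast_ne_zero.mpr hm
  push_cast
  field_simp
  linear_combination hn

lemma qden_ne (h : ℂ) (hh : ∀ r : ℚ, h ≠ 2 * Real.pi * Complex.I * r) :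
    Complex.exp h - Complex.exp (-h) ≠ 0 := by
  intro h0
  have hx : Complex.exp h = Complex.exp (-h) := sub_eq_zero.mp h0
  have h2 : Complex.exp (h * (2 : ℤ)) = 1 := by
    have : Complex.exp (h * (2:ℤ)) = Complex.exp h * Complex.exp h := by
      rw [← Complex.exp_add]; push_cast; ring_nf
    rw [this]
    nth_rewrite 2 [hx]
    rw [← Complex.exp_add]
    simp
  have := key_int h hh 2 h2
  norm_num at this

/-- if `exp (h*b₁) = exp (h*b₂)` and `b₁ - b₂` is a nonzero integer, contradiction. -/
lemma exp_eq_exp_int (h : ℂ) (hh : ∀ r : ℚ, h ≠ 2 * Real.pi * Complex.I * r)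
    {b₁ b₂ : ℂ} (m : ℤ) (hb : b₁ - b₂ = m)
    (he : Complex.exp (h * b₁) = Complex.exp (h * b₂)) : m = 0 := by
  apply key_int h hh
  have : Complex.exp (h * m) * Complex.exp (h * b₂) = Complex.exp (h * b₂) := by
    rw [← Complex.exp_add, ← hb]
    rw [show h * (b₁ - b₂) + h * b₂ = h * b₁ by ring, he]
  have hne := Complex.exp_ne_zero (h * b₂)
  field_simp at this
  exact this

/-- eigenvalue injectivity -/
lemma lam_inj (h : ℂ) (hh : ∀ r : ℚ, h ≠ 2 * Real.pi * Complex.I * r)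
    (m₀ : ℂ) (hm : ∀ k : ℤ, qpow h (2 * m₀ + k) ≠ -1)
    {k j : ℤ} (hkj : Complex.I * qnum h (m₀ + k) = Complex.I * qnum h (m₀ + j)) : k = j := by
  have hq : qnum h (m₀ + k) = qnum h (m₀ + j) :=
    mul_left_cancel₀ Complex.I_ne_zero hkj
  have hd := qden_ne h hh
  unfold qnum at hq
  rw [div_eq_div_iff hd hd] at hq
  have hnum : Complex.exp (h * (m₀ + k)) - Complex.exp (-(h * (m₀ + k)))
      = Complex.exp (h * (m₀ + j)) - Complex.exp (-(h * (m₀ + j))) :=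
    mul_right_cancel₀ hd hq
  set x := Complex.exp (h * (m₀ + k)) with hxdef
  set y := Complex.exp (h * (m₀ + j)) with hydef
  have hxinv : Complex.exp (-(h * (m₀ + k))) = x⁻¹ := by rw [Complex.exp_neg]
  have hyinv : Complex.exp (-(h * (m₀ + j))) = y⁻¹ := by rw [Complex.exp_neg]
  rw [hxinv, hyinv] at hnum
  have hx0 : x ≠ 0 := Complex.exp_ne_zero _
  have hy0 : y ≠ 0 := Complex.exp_ne_zero _
  have hfact : (x - y) * (x * y + 1) = 0 := by
    have h1 : x - x⁻¹ - (y - y⁻¹) = 0 := by rw [hnum]; ring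
    field_simp at h1
    linear_combination h1
  rcases mul_eq_zero.mp hfact with hxy | hxy
  · -- x = y
    have hx : x = y := sub_eq_zero.mp hxy
    have := exp_eq_exp_int h hh (b₁ := m₀ + k) (b₂ := m₀ + j) (k - j) (by push_cast; ring) hx
    omega
  · -- x*y = -1
    exfalso
    apply hm (k + j)
    have : qpow h (2 * m₀ + (k + j : ℤ)) = x * y := by
      unfold qpow
      rw [hxdef, hydef, ← Complex.exp_add]
      push_cast; ring_nf
    rw [this]
    linear_combination hxy

/-- a qnum vanishes at most once along an integer shift. -/
lemma qnum_zero_unique (h : ℂ) (hh : ∀ r : ℚ, h ≠ 2 * Real.pi * Complex.I * r)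
    {b₁ b₂ : ℂ} (m : ℤ) (hb : b₁ - b₂ = m)
    (h1 : qnum h b₁ = 0) (h2 : qnum h b₂ = 0) : m = 0 := by
  have hd := qden_ne h hh
  unfold qnum at h1 h2
  rw [div_eq_zero_iff] at h1 h2
  have e1 : Complex.exp (h * b₁) = Complex.exp (-(h * b₁)) := by
    rcases h1 with h1 | h1
    · exact sub_eq_zero.mp h1
    · exact absurd h1 hd
  have e2 : Complex.exp (h * b₂) = Complex.exp (-(h * b₂)) := by
    rcases h2 with h2 | h2
    · exact sub_eq_zero.mp h2
    · exact absurd h2 hd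
  -- exp (2 h b₁) = 1 and exp (2 h b₂) = 1
  have f1 : Complex.exp (h * (2 * b₁)) = 1 := by
    have := congrArg (· * Complex.exp (h * b₁)) e1
    simp only [← Complex.exp_add] at this
    rw [show -(h*b₁) + h*b₁ = 0 by ring, Complex.exp_zero] at this
    rw [show h * (2*b₁) = h*b₁ + h*b₁ by ring]
    exact this
  have f2 : Complex.exp (h * (2 * b₂)) = 1 := by
    have := congrArg (· * Complex.exp (h * b₂)) e2
    simp only [← Complex.exp_add] at this
    rw [show -(h*b₂) + h*b₂ = 0 by ring, Complex.exp_zero] at this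
    rw [show h * (2*b₂) = h*b₂ + h*b₂ by ring]
    exact this
  have := exp_eq_exp_int h hh (b₁ := 2*b₁) (b₂ := 2*b₂) (2*m)
    (by push_cast; rw [← hb]; ring) (by rw [f1, f2])
  omega

/-- denominator factors are nonzero -/
lemma qden_factor_ne (h m₀ : ℂ) (hm : ∀ k : ℤ, qpow h (2 * m₀ + k) ≠ -1)
    (k : ℤ) : qpow h (m₀ + k) + qpow h (-(m₀ + k)) ≠ 0 := by
  intro h0
  apply hm (2 * k)
  have hx0 : qpow h (-(m₀ + k)) ≠ 0 := Complex.exp_ne_zero _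
  have hxy : qpow h (m₀ + k) * qpow h (-(m₀ + k)) = 1 := by
    unfold qpow; rw [← Complex.exp_add]
    rw [show h * (m₀ + k) + h * (-(m₀+k)) = 0 by ring, Complex.exp_zero]
  have hsq : qpow h (2 * m₀ + (2*k : ℤ)) = qpow h (m₀ + k) * qpow h (m₀ + k) := by
    unfold qpow; rw [← Complex.exp_add]; push_cast; ring_nf
  rw [hsq]
  linear_combination qpow h (m₀ + (k:ℂ)) * h0 - hxy

lemma gtA_zero_iff (h ℓ m₀ : ℂ) (hm : ∀ k : ℤ, qpow h (2 * m₀ + k) ≠ -1) (k : ℤ) :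
    gtA h ℓ m₀ k = 0 ↔ qnum h (ℓ + m₀ + k + 1) = 0 ∨ qnum h (ℓ - m₀ - k) = 0 := by
  have h1 := qden_factor_ne h m₀ hm k
  have h2 := qden_factor_ne h m₀ hm (k + 1)
  have h2' : qpow h (m₀ + k + 1) + qpow h (-(m₀ + k + 1)) ≠ 0 := by
    have e1 : (m₀ + (k:ℂ) + 1) = m₀ + ((k+1 : ℤ) : ℂ) := by push_cast; ring
    rw [e1]; exact h2
  unfold gtA
  rw [div_eq_zero_iff, mul_eq_zero, mul_eq_zero]
  tauto

/-- `gtA` vanishes at most twice. -/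
lemma gtA_three_zeros (h : ℂ) (hh : ∀ r : ℚ, h ≠ 2 * Real.pi * Complex.I * r)
    (ℓ m₀ : ℂ) (hm : ∀ k : ℤ, qpow h (2 * m₀ + k) ≠ -1)
    {k₁ k₂ k₃ : ℤ} (h12 : k₁ < k₂) (h23 : k₂ < k₃)
    (z1 : gtA h ℓ m₀ k₁ = 0) (z2 : gtA h ℓ m₀ k₂ = 0) (z3 : gtA h ℓ m₀ k₃ = 0) : False := by
  rw [gtA_zero_iff h ℓ m₀ hm] at z1 z2 z3
  have plus : ∀ {a b : ℤ}, qnum h (ℓ + m₀ + a + 1) = 0 → qnum h (ℓ + m₀ + b + 1) = 0 → a = b := by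
    intro a b ha hb
    have := qnum_zero_unique h hh (b₁ := ℓ + m₀ + a + 1) (b₂ := ℓ + m₀ + b + 1) (a - b)
      (by push_cast; ring) ha hb
    omega
  have minus : ∀ {a b : ℤ}, qnum h (ℓ - m₀ - a) = 0 → qnum h (ℓ - m₀ - b) = 0 → a = b := by
    intro a b ha hb
    have := qnum_zero_unique h hh (b₁ := ℓ - m₀ - a) (b₂ := ℓ - m₀ - b) (b - a)
      (by push_cast; ring) ha hb
    omega
  rcases z1 with z1 | z1 <;> rcases z2 with z2 | z2 <;> rcases z3 with z3 | z3
  · exact absurd (plus z1 z2) (by omega)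
  · exact absurd (plus z1 z2) (by omega)
  · exact absurd (plus z1 z3) (by omega)
  · exact absurd (minus z2 z3) (by omega)
  · exact absurd (plus z2 z3) (by omega)
  · exact absurd (minus z1 z3) (by omega)
  · exact absurd (minus z1 z2) (by omega)
  · exact absurd (minus z1 z2) (by omega)

open Finsupp

lemma diag_apply (h m₀ : ℂ) (I21 : Module.End ℂ (ℤ →₀ ℂ))
    (hI21 : ∀ k : ℤ, I21 (Finsupp.single k 1) =
      (Complex.I * qnum h (m₀ + k)) • Finsupp.single k 1)
    (v : ℤ →₀ ℂ) (m : ℤ) : I21 v m = (Complex.I * qnum h (m₀ + m)) * v m := by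
  induction v using Finsupp.induction_linear with
  | zero => simp
  | add f g hf hg => rw [map_add]; simp [hf, hg]; ring
  | single k c =>
    have hs : (Finsupp.single k c : ℤ →₀ ℂ) = c • Finsupp.single k 1 := by
      rw [Finsupp.smul_single', mul_one]
    rw [hs, map_smul, hI21 k]
    rcases eq_or_ne k m with rfl | hk
    · simp [Finsupp.single_apply]; ring
    · simp [Finsupp.single_apply, hk]

lemma extract_single (h m₀ : ℂ) (I21 : Module.End ℂ (ℤ →₀ ℂ))
    (hI21 : ∀ k : ℤ, I21 (Finsupp.single k 1) =
      (Complex.I * qnum h (m₀ + k)) • Finsupp.single k 1)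
    (hlam : ∀ k j : ℤ, Complex.I * qnum h (m₀ + k) = Complex.I * qnum h (m₀ + j) → k = j)
    (W : Submodule ℂ (ℤ →₀ ℂ)) (hW : ∀ v ∈ W, I21 v ∈ W) :
    ∀ (N : ℕ) (v : ℤ →₀ ℂ), v ∈ W → v.support.card ≤ N →
      ∀ k ∈ v.support, Finsupp.single k (1:ℂ) ∈ W := by
  intro N
  induction N with
  | zero =>
    intro v _ hcard k hk
    rw [Nat.le_zero, Finset.card_eq_zero] at hcard
    rw [hcard] at hk
    exact absurd hk (Finset.notMem_empty k)
  | succ N IH =>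
    intro v hv hcard k hk
    by_cases hex : ∃ j ∈ v.support, j ≠ k
    · obtain ⟨j, hj, hjk⟩ := hex
      set lam : ℤ → ℂ := fun m => Complex.I * qnum h (m₀ + m) with hlamdef
      set w := I21 v - lam j • v with hw
      have hwW : w ∈ W := W.sub_mem (hW v hv) (W.smul_mem _ hv)
      have hwapp : ∀ m, w m = (lam m - lam j) * v m := by
        intro m
        rw [hw, Finsupp.sub_apply, Finsupp.smul_apply, diag_apply h m₀ I21 hI21]
        simp [hlamdef]; ring
      have hsub : w.support ⊆ v.support.erase j := by
        intro m hm'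
        rw [Finsupp.mem_support_iff, hwapp] at hm'
        rw [Finset.mem_erase, Finsupp.mem_support_iff]
        constructor
        · rintro rfl; exact hm' (by simp)
        · intro h0; exact hm' (by rw [h0]; ring)
      have hcard' : w.support.card ≤ N := by
        have := Finset.card_le_card hsub
        rw [Finset.card_erase_of_mem hj] at this
        omega
      have hkw : k ∈ w.support := by
        rw [Finsupp.mem_support_iff, hwapp]
        refine mul_ne_zero (sub_ne_zero.mpr ?_) (Finsupp.mem_support_iff.mp hk)
        intro e
        exact hjk (hlam k j e).symm
      exact IH w hwW hcard' k hkw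
    · push_neg at hex
      have hsubs : v.support ⊆ {k} := by
        intro m hm'; rw [Finset.mem_singleton]; exact hex m hm'
      have hveq : v = Finsupp.single k (v k) := Finsupp.support_subset_singleton.mp hsubs
      have hvk : v k ≠ 0 := Finsupp.mem_support_iff.mp hk
      have : Finsupp.single k (1:ℂ) = (v k)⁻¹ • v := by
        rw [hveq, Finsupp.smul_single']
        rw [Finsupp.single_eq_same, inv_mul_cancel₀ hvk]
      rw [this]
      exact W.smul_mem _ hv

lemma span_singles (W : Submodule ℂ (ℤ →₀ ℂ)) (v : ℤ →₀ ℂ)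
    (hs : ∀ k ∈ v.support, Finsupp.single k (1:ℂ) ∈ W) : v ∈ W := by
  have hv : v = v.sum Finsupp.single := (Finsupp.sum_single v).symm
  rw [hv]
  apply Submodule.finsuppSum_mem
  intro c hc
  have : Finsupp.single c (v c) = v c • Finsupp.single c (1:ℂ) := by
    rw [Finsupp.smul_single', mul_one]
  rw [this]
  exact W.smul_mem _ (hs c (Finsupp.mem_support_iff.mpr hc))

lemma ladder (h ℓ m₀ : ℂ) (I21 I32 : Module.End ℂ (ℤ →₀ ℂ))
    (hI21 : ∀ k : ℤ, I21 (Finsupp.single k 1) =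
      (Complex.I * qnum h (m₀ + k)) • Finsupp.single k 1)
    (hI32 : ∀ k : ℤ, I32 (Finsupp.single k 1) =
      gtA h ℓ m₀ k • Finsupp.single (k + 1) 1 - Finsupp.single (k - 1) 1)
    (hlam : ∀ k j : ℤ, Complex.I * qnum h (m₀ + k) = Complex.I * qnum h (m₀ + j) → k = j)
    (W : Submodule ℂ (ℤ →₀ ℂ)) (hW21 : ∀ v ∈ W, I21 v ∈ W) (hW32 : ∀ v ∈ W, I32 v ∈ W)
    (k : ℤ) (hk : Finsupp.single k (1:ℂ) ∈ W) :
    Finsupp.single (k-1) (1:ℂ) ∈ W ∧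
      (gtA h ℓ m₀ k ≠ 0 → Finsupp.single (k+1) (1:ℂ) ∈ W) := by
  set w := I32 (Finsupp.single k (1:ℂ)) with hwdef
  have hwW : w ∈ W := hW32 _ hk
  have hwv : w = gtA h ℓ m₀ k • Finsupp.single (k + 1) 1 - Finsupp.single (k - 1) 1 := hI32 k
  have happ : ∀ m : ℤ, w m = gtA h ℓ m₀ k * (Finsupp.single (k+1) (1:ℂ)) m
      - (Finsupp.single (k-1) (1:ℂ)) m := by
    intro m; rw [hwv, Finsupp.sub_apply, Finsupp.smul_apply]; simp
  have hext := extract_single h m₀ I21 hI21 hlam W hW21 w.support.card w hwW le_rfl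
  constructor
  · have hm1 : (k - 1) ∈ w.support := by
      rw [Finsupp.mem_support_iff, happ]
      rw [Finsupp.single_apply, Finsupp.single_apply]
      rw [if_neg (by omega), if_pos rfl]
      norm_num
    exact hext _ hm1
  · intro ha
    have hm1 : (k + 1) ∈ w.support := by
      rw [Finsupp.mem_support_iff, happ]
      rw [Finsupp.single_apply, Finsupp.single_apply]
      rw [if_pos rfl, if_neg (by omega)]
      simpa using ha
    exact hext _ hm1

lemma down (h ℓ m₀ : ℂ) (I21 I32 : Module.End ℂ (ℤ →₀ ℂ))
    (hI21 : ∀ k : ℤ, I21 (Finsupp.single k 1) =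
      (Complex.I * qnum h (m₀ + k)) • Finsupp.single k 1)
    (hI32 : ∀ k : ℤ, I32 (Finsupp.single k 1) =
      gtA h ℓ m₀ k • Finsupp.single (k + 1) 1 - Finsupp.single (k - 1) 1)
    (hlam : ∀ k j : ℤ, Complex.I * qnum h (m₀ + k) = Complex.I * qnum h (m₀ + j) → k = j)
    (W : Submodule ℂ (ℤ →₀ ℂ)) (hW21 : ∀ v ∈ W, I21 v ∈ W) (hW32 : ∀ v ∈ W, I32 v ∈ W)
    (k : ℤ) (hk : Finsupp.single k (1:ℂ) ∈ W) (j : ℤ) (hj : j ≤ k) :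
    Finsupp.single j (1:ℂ) ∈ W := by
  have hstep : ∀ d : ℕ, Finsupp.single (k - d) (1:ℂ) ∈ W := by
    intro d
    induction d with
    | zero => simpa using hk
    | succ d ih =>
      have := (ladder h ℓ m₀ I21 I32 hI21 hI32 hlam W hW21 hW32 (k - d) ih).1
      rwa [show k - (d:ℤ) - 1 = k - ((d+1 : ℕ) : ℤ) by push_cast; ring] at this
  have := hstep (k - j).toNat
  rwa [show k - ((k - j).toNat : ℤ) = j by omega] at this

theorem stmt_10 (h : ℂ) (hh : ∀ r : ℚ, h ≠ 2 * Real.pi * Complex.I * r)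
    (ℓ m₀ : ℂ) (hm : ∀ k : ℤ, qpow h (2 * m₀ + k) ≠ -1)
    (I21 I32 : Module.End ℂ (ℤ →₀ ℂ))
    (hI21 : ∀ k : ℤ, I21 (Finsupp.single k 1) =
      (Complex.I * qnum h (m₀ + k)) • Finsupp.single k 1)
    (hI32 : ∀ k : ℤ, I32 (Finsupp.single k 1) =
      gtA h ℓ m₀ k • Finsupp.single (k + 1) 1 - Finsupp.single (k - 1) 1)
    (n : ℕ) (U : Fin (n + 1) → Submodule ℂ (ℤ →₀ ℂ))
    (hinv21 : ∀ i, ∀ v ∈ U i, I21 v ∈ U i)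
    (hinv32 : ∀ i, ∀ v ∈ U i, I32 v ∈ U i)
    (hmono : StrictMono U) (hbot : U 0 = ⊥) (htop : U (Fin.last n) = ⊤) :
    n ≤ 3 := by
  by_contra hn
  push_neg at hn
  have hlam : ∀ k j : ℤ, Complex.I * qnum h (m₀ + k) = Complex.I * qnum h (m₀ + j) → k = j :=
    fun k j e => lam_inj h hh m₀ hm e
  -- for every proper nontrivial invariant subspace, produce the "top index" N
  have key : ∀ i : Fin (n + 1), U i ≠ ⊥ → U i ≠ ⊤ →
      ∃ N : ℤ, gtA h ℓ m₀ N = 0 ∧ Finsupp.single N (1:ℂ) ∈ U i ∧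
        ∀ k : ℤ, Finsupp.single k (1:ℂ) ∈ U i → k ≤ N := by
    intro i hne hnt
    obtain ⟨v, hvU, hv0⟩ := Submodule.exists_mem_ne_zero_of_ne_bot hne
    have hsupp : v.support.Nonempty := Finsupp.support_nonempty_iff.mpr hv0
    obtain ⟨k₀, hk₀⟩ := hsupp
    have hk₀U : Finsupp.single k₀ (1:ℂ) ∈ U i :=
      extract_single h m₀ I21 hI21 hlam (U i) (hinv21 i) v.support.card v hvU le_rfl k₀ hk₀
    have Hbdd : ∃ b : ℤ, ∀ z : ℤ, Finsupp.single z (1:ℂ) ∈ U i → z ≤ b := by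
      by_contra hb
      push_neg at hb
      have hall : ∀ k : ℤ, Finsupp.single k (1:ℂ) ∈ U i := by
        intro k
        obtain ⟨z, hz, hkz⟩ := hb k
        exact down h ℓ m₀ I21 I32 hI21 hI32 hlam (U i) (hinv21 i) (hinv32 i) z hz k hkz.le
      apply hnt
      rw [eq_top_iff]
      intro w _
      exact span_singles (U i) w (fun k _ => hall k)
    obtain ⟨N, hNmem, hNmax⟩ := Int.exists_greatest_of_bdd Hbdd ⟨k₀, hk₀U⟩
    refine ⟨N, ?_, hNmem, hNmax⟩
    by_contra ha
    have := (ladder h ℓ m₀ I21 I32 hI21 hI32 hlam (U i) (hinv21 i) (hinv32 i) N hNmem).2 ha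
    have := hNmax _ this
    omega
  -- three indices
  have h1n : (1 : ℕ) < n + 1 := by omega
  have h2n : (2 : ℕ) < n + 1 := by omega
  have h3n : (3 : ℕ) < n + 1 := by omega
  set i1 : Fin (n+1) := ⟨1, h1n⟩
  set i2 : Fin (n+1) := ⟨2, h2n⟩
  set i3 : Fin (n+1) := ⟨3, h3n⟩
  have hprop : ∀ i : Fin (n+1), (0:ℕ) < i.1 → i.1 < n → U i ≠ ⊥ ∧ U i ≠ ⊤ := by
    intro i h0 hl
    constructor
    · intro e
      have := hmono (show (0 : Fin (n+1)) < i by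
        rw [Fin.lt_def]; simpa using h0)
      rw [hbot, e] at this
      exact lt_irrefl _ this
    · intro e
      have := hmono (show i < Fin.last n by rw [Fin.lt_def]; simpa using hl)
      rw [htop, e] at this
      exact lt_irrefl _ this
  have hp1 := hprop i1 (by show 0 < 1; omega) (by show 1 < n; omega)
  have hp2 := hprop i2 (by show 0 < 2; omega) (by show 2 < n; omega)
  have hp3 := hprop i3 (by show 0 < 3; omega) (by show 3 < n; omega)
  obtain ⟨N1, hz1, hN1mem, hN1max⟩ := key i1 hp1.1 hp1.2
  obtain ⟨N2, hz2, hN2mem, hN2max⟩ := key i2 hp2.1 hp2.2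
  obtain ⟨N3, hz3, hN3mem, hN3max⟩ := key i3 hp3.1 hp3.2
  -- N1 < N2 and N2 < N3
  have step : ∀ i j : Fin (n+1), i < j → ∀ Ni Nj : ℤ,
      Finsupp.single Ni (1:ℂ) ∈ U i → (∀ k : ℤ, Finsupp.single k (1:ℂ) ∈ U j → k ≤ Nj) →
      Ni < Nj := by
    intro i j hij Ni Nj hNi hNjmax
    obtain ⟨v, hvj, hvi⟩ := SetLike.exists_of_lt (hmono hij)
    have hv0 : v ≠ 0 := by rintro rfl; exact hvi (Submodule.zero_mem _)
    have hex : ∃ k ∈ v.support, Finsupp.single k (1:ℂ) ∉ U i := by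
      by_contra hc
      push_neg at hc
      exact hvi (span_singles (U i) v hc)
    obtain ⟨k, hk, hkni⟩ := hex
    have hkj : Finsupp.single k (1:ℂ) ∈ U j :=
      extract_single h m₀ I21 hI21 hlam (U j) (hinv21 j) v.support.card v hvj le_rfl k hk
    have h1 : k ≤ Nj := hNjmax k hkj
    have h2 : Ni < k := by
      by_contra hc
      push_neg at hc
      exact hkni (down h ℓ m₀ I21 I32 hI21 hI32 hlam (U i) (hinv21 i) (hinv32 i) Ni hNi k hc)
    omega
  have h12 : N1 < N2 := step i1 i2 (by rw [Fin.lt_def]; show 1 < 2; omega) N1 N2 hN1mem hN2max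
  have h23 : N2 < N3 := step i2 i3 (by rw [Fin.lt_def]; show 2 < 3; omega) N2 N3 hN2mem hN3max
  exact gtA_three_zeros h hh ℓ m₀ hm h12 h23 hz1 hz2 hz3
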